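/- arXiv:math/9703205 — 4 statements merged into one kernel-verified Lean document; each statement's English description precedes it below -/
import Mathlib

section
/- Let h : [1,∞) → ℝ satisfy h(ξ) = ξ + g(ξ) where g is differentiable with |g'(ξ)| ≤ C ξ^(-2/3) for all ξ ≥ 1. Then the improper integral ∫₁^∞ ξ^(-2/3) exp(i h(ξ)) dξ converges, and moreover ∫_N^∞ ξ^(-2/3) exp(i h(ξ)) dξ = O(N^(-1/3)) as N → ∞. -/
open MeasureTheory Filter Real Set intervalIntegral
open scoped Topology

noncomputable def auxF (g : ℝ → ℝ) : ℝ → ℂ :=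
  fun x => ((x ^ (-(2:ℝ)/3) : ℝ) : ℂ) * Complex.exp (Complex.I * (g x : ℂ))

noncomputable def auxF' (g : ℝ → ℝ) : ℝ → ℂ :=
  fun x => ((-(2:ℝ)/3 * x ^ (-(2:ℝ)/3 - 1) : ℝ) : ℂ) * Complex.exp (Complex.I * (g x : ℂ))
    + ((x ^ (-(2:ℝ)/3) : ℝ) : ℂ) *
        (Complex.exp (Complex.I * (g x : ℂ)) * (Complex.I * ((deriv g x : ℝ) : ℂ)))

noncomputable def auxE : ℝ → ℂ := fun x => -Complex.I * Complex.exp (Complex.I * (x : ℂ))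

lemma norm_exp_I_mul (t : ℝ) : ‖Complex.exp (Complex.I * (t : ℂ))‖ = 1 := by
  rw [Complex.norm_exp]
  simp

lemma norm_auxE (x : ℝ) : ‖auxE x‖ = 1 := by
  rw [auxE, norm_mul, norm_exp_I_mul]
  simp

lemma auxE_hasDeriv (x : ℝ) : HasDerivAt auxE (Complex.exp (Complex.I * (x:ℂ))) x := by
  have h1 : HasDerivAt (fun y : ℝ => ((y:ℝ):ℂ)) 1 x := (hasDerivAt_id x).ofReal_comp
  have h2 := (h1.const_mul Complex.I).cexp
  have h3 := h2.const_mul (-Complex.I)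
  refine h3.congr_deriv ?_
  rw [mul_comm]
  ring_nf
  rw [Complex.I_sq]
  ring

lemma auxF_hasDeriv (g : ℝ → ℝ) (x : ℝ) (hx : (0:ℝ) < x) (hgd : DifferentiableAt ℝ g x) :
    HasDerivAt (auxF g) (auxF' g x) x := by
  have h1 : HasDerivAt (fun y : ℝ => y ^ (-(2:ℝ)/3)) ((-(2:ℝ)/3) * x ^ (-(2:ℝ)/3 - 1)) x :=
    Real.hasDerivAt_rpow_const (Or.inl hx.ne')
  have h1c := h1.ofReal_comp
  have h2 : HasDerivAt (fun y : ℝ => ((g y : ℝ) : ℂ)) ((deriv g x : ℝ) : ℂ) x :=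
    (hgd.hasDerivAt).ofReal_comp
  have h3 := ((h2.const_mul Complex.I).cexp)
  have := h1c.mul h3
  exact this

lemma auxF'_bound (g : ℝ → ℝ) (C : ℝ) (x : ℝ) (hx : 1 ≤ x)
    (hg' : |deriv g x| ≤ C * x ^ (-(2:ℝ)/3)) :
    ‖auxF' g x‖ ≤ (2:ℝ)/3 * x ^ (-(5:ℝ)/3) + C * x ^ (-(4:ℝ)/3) := by
  have hx0 : (0:ℝ) < x := lt_of_lt_of_le one_pos hx
  have hexp : (-(2:ℝ)/3 - 1) = (-(5:ℝ)/3) := by norm_num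
  have hadd : x ^ (-(2:ℝ)/3) * x ^ (-(2:ℝ)/3) = x ^ (-(4:ℝ)/3) := by
    rw [← Real.rpow_add hx0]; norm_num
  have e1 : ‖((-(2:ℝ)/3 * x ^ (-(2:ℝ)/3 - 1) : ℝ) : ℂ) * Complex.exp (Complex.I * (g x:ℂ))‖
      = (2:ℝ)/3 * x ^ (-(2:ℝ)/3 - 1) := by
    rw [norm_mul, norm_exp_I_mul, mul_one, Complex.norm_real, Real.norm_eq_abs, abs_mul,
      abs_of_nonneg (Real.rpow_nonneg hx0.le _)]
    norm_num
  have e2 : ‖((x ^ (-(2:ℝ)/3) : ℝ) : ℂ) *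
        (Complex.exp (Complex.I * (g x:ℂ)) * (Complex.I * ((deriv g x : ℝ):ℂ)))‖
      = x ^ (-(2:ℝ)/3) * |deriv g x| := by
    rw [norm_mul, norm_mul, norm_mul, norm_exp_I_mul, Complex.norm_I, Complex.norm_real,
      Complex.norm_real, Real.norm_eq_abs, Real.norm_eq_abs,
      abs_of_nonneg (Real.rpow_nonneg hx0.le _)]
    ring
  have h1 : ‖auxF' g x‖ ≤ (2:ℝ)/3 * x ^ (-(2:ℝ)/3 - 1) + x ^ (-(2:ℝ)/3) * |deriv g x| := by
    refine (norm_add_le _ _).trans ?_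
    rw [e1, e2]
  refine h1.trans ?_
  rw [hexp]
  refine add_le_add le_rfl ?_
  calc x ^ (-(2:ℝ)/3) * |deriv g x| ≤ x ^ (-(2:ℝ)/3) * (C * x ^ (-(2:ℝ)/3)) :=
        mul_le_mul_of_nonneg_left hg' (Real.rpow_nonneg hx0.le _)
    _ = C * x ^ (-(4:ℝ)/3) := by rw [← hadd]; ring

lemma auxE_continuous : Continuous auxE := by
  unfold auxE
  fun_prop

lemma auxF'_meas (g : ℝ → ℝ) (hgdiff : ∀ ξ ≥ (1:ℝ), DifferentiableAt ℝ g ξ) :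
    AEStronglyMeasurable (auxF' g) (volume.restrict (Ioi 1)) := by
  have hgcont : ContinuousOn g (Ioi 1) := fun x hx =>
    ((hgdiff x (le_of_lt hx)).continuousAt).continuousWithinAt
  have hgm : AEStronglyMeasurable (fun x => ((g x : ℝ):ℂ)) (volume.restrict (Ioi 1)) :=
    (Complex.continuous_ofReal.comp_continuousOn hgcont).aestronglyMeasurable measurableSet_Ioi
  have hexp : AEStronglyMeasurable (fun x => Complex.exp (Complex.I * (g x:ℂ)))
      (volume.restrict (Ioi 1)) :=
    Complex.continuous_exp.comp_aestronglyMeasurable (aestronglyMeasurable_const.mul hgm)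
  have hr1 : ContinuousOn (fun x:ℝ => ((-(2:ℝ)/3 * x ^ (-(2:ℝ)/3 - 1) : ℝ) : ℂ)) (Ioi 1) := by
    refine Complex.continuous_ofReal.comp_continuousOn (continuousOn_const.mul ?_)
    exact fun x hx =>
      (Real.continuousAt_rpow_const x _ (Or.inl (ne_of_gt (lt_trans one_pos hx)))).continuousWithinAt
  have hr2 : ContinuousOn (fun x:ℝ => ((x ^ (-(2:ℝ)/3) : ℝ) : ℂ)) (Ioi 1) := by
    refine Complex.continuous_ofReal.comp_continuousOn ?_
    exact fun x hx =>
      (Real.continuousAt_rpow_const x _ (Or.inl (ne_of_gt (lt_trans one_pos hx)))).continuousWithinAt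
  have hd : AEStronglyMeasurable (fun x => ((deriv g x :ℝ):ℂ)) (volume.restrict (Ioi 1)) :=
    (Complex.measurable_ofReal.comp (measurable_deriv g)).aestronglyMeasurable
  exact ((hr1.aestronglyMeasurable measurableSet_Ioi).mul hexp).add
    ((hr2.aestronglyMeasurable measurableSet_Ioi).mul
      (hexp.mul (aestronglyMeasurable_const.mul hd)))

lemma auxφ_integrableOn (C : ℝ) :
    IntegrableOn (fun x : ℝ => (2:ℝ)/3 * x ^ (-(5:ℝ)/3) + C * x ^ (-(4:ℝ)/3)) (Ioi 1) := by
  exact ((integrableOn_Ioi_rpow_of_lt (by norm_num) one_pos).const_mul _).add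
    ((integrableOn_Ioi_rpow_of_lt (by norm_num) one_pos).const_mul _)

lemma auxF'_integrableOn (g : ℝ → ℝ) (C : ℝ)
    (hgdiff : ∀ ξ ≥ (1:ℝ), DifferentiableAt ℝ g ξ)
    (hg' : ∀ ξ ≥ (1:ℝ), |deriv g ξ| ≤ C * ξ ^ (-(2:ℝ)/3)) :
    IntegrableOn (auxF' g) (Ioi 1) := by
  refine Integrable.mono' (auxφ_integrableOn C) (auxF'_meas g hgdiff) ?_
  refine (ae_restrict_iff' measurableSet_Ioi).2 (ae_of_all _ fun x hx => ?_)
  exact auxF'_bound g C x (le_of_lt hx) (hg' x (le_of_lt hx))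

lemma auxG_integrableOn (g : ℝ → ℝ) (C : ℝ)
    (hgdiff : ∀ ξ ≥ (1:ℝ), DifferentiableAt ℝ g ξ)
    (hg' : ∀ ξ ≥ (1:ℝ), |deriv g ξ| ≤ C * ξ ^ (-(2:ℝ)/3)) :
    IntegrableOn (fun x => auxF' g x * auxE x) (Ioi 1) := by
  refine Integrable.mono' (auxφ_integrableOn C)
    ((auxF'_meas g hgdiff).mul auxE_continuous.aestronglyMeasurable) ?_
  refine (ae_restrict_iff' measurableSet_Ioi).2 (ae_of_all _ fun x hx => ?_)
  rw [norm_mul, norm_auxE, mul_one]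
  exact auxF'_bound g C x (le_of_lt hx) (hg' x (le_of_lt hx))

theorem stmt0 (h g : ℝ → ℝ) (C : ℝ) (hC : 0 < C)
    (hhg : ∀ ξ ≥ (1:ℝ), h ξ = ξ + g ξ)
    (hgdiff : ∀ ξ ≥ (1:ℝ), DifferentiableAt ℝ g ξ)
    (hg' : ∀ ξ ≥ (1:ℝ), |deriv g ξ| ≤ C * ξ ^ (-(2:ℝ)/3)) :
    ∃ L : ℂ,
      Tendsto (fun N : ℝ => ∫ ξ in (1:ℝ)..N,
          (↑(ξ ^ (-(2:ℝ)/3)) : ℂ) * Complex.exp (Complex.I * (h ξ : ℂ))) atTop (𝓝 L) ∧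
      ∃ C' : ℝ, ∀ᶠ N : ℝ in atTop,
        ‖L - ∫ ξ in (1:ℝ)..N,
            (↑(ξ ^ (-(2:ℝ)/3)) : ℂ) * Complex.exp (Complex.I * (h ξ : ℂ))‖
          ≤ C' * N ^ (-(1:ℝ)/3) := by
  have hGint := auxG_integrableOn g C hgdiff hg'
  have hexpcont : Continuous (fun x : ℝ => Complex.exp (Complex.I * (x:ℂ))) :=
    Complex.continuous_exp.comp (continuous_const.mul Complex.continuous_ofReal)
  have key : ∀ N ≥ (1:ℝ),
      (∫ ξ in (1:ℝ)..N, (↑(ξ ^ (-(2:ℝ)/3)) : ℂ) * Complex.exp (Complex.I * (h ξ:ℂ)))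
      = auxF g N * auxE N - auxF g 1 * auxE 1 - ∫ x in (1:ℝ)..N, auxF' g x * auxE x := by
    intro N hN
    have hcongr : EqOn (fun ξ : ℝ => (↑(ξ ^ (-(2:ℝ)/3)) : ℂ) * Complex.exp (Complex.I * (h ξ:ℂ)))
        (fun x => auxF g x * Complex.exp (Complex.I * (x:ℂ))) (uIcc (1:ℝ) N) := by
      intro x hx
      rw [uIcc_of_le hN] at hx
      simp only [auxF]
      rw [hhg x hx.1]
      push_cast
      rw [mul_add, Complex.exp_add]
      ring
    rw [intervalIntegral.integral_congr hcongr]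
    exact integral_mul_deriv_eq_deriv_mul
      (fun x hx => auxF_hasDeriv g x
        (by rw [uIcc_of_le hN] at hx; linarith [hx.1])
        (hgdiff x (by rw [uIcc_of_le hN] at hx; exact hx.1)))
      (fun x _ => auxE_hasDeriv x)
      ((intervalIntegrable_iff_integrableOn_Ioc_of_le hN).2
        ((auxF'_integrableOn g C hgdiff hg').mono_set Ioc_subset_Ioi_self))
      (hexpcont.intervalIntegrable 1 N)
  have hFEnorm : ∀ N : ℝ, 0 < N → ‖auxF g N * auxE N‖ = N ^ (-(2:ℝ)/3) := by
    intro N hN0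
    rw [norm_mul, norm_auxE, mul_one, auxF, norm_mul, norm_exp_I_mul, mul_one,
      Complex.norm_real, Real.norm_eq_abs, abs_of_nonneg (Real.rpow_nonneg hN0.le _)]
  refine ⟨-(auxF g 1 * auxE 1) - ∫ x in Ioi 1, auxF' g x * auxE x, ?_, ?_⟩
  · have hFE0 : Tendsto (fun N : ℝ => auxF g N * auxE N) atTop (𝓝 0) := by
      have hb : ∀ᶠ N : ℝ in atTop, ‖auxF g N * auxE N‖ ≤ N ^ (-(2:ℝ)/3) := by
        filter_upwards [eventually_ge_atTop (1:ℝ)] with N hN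
        exact le_of_eq (hFEnorm N (by linarith))
      have ht : Tendsto (fun N:ℝ => N ^ (-(2:ℝ)/3)) atTop (𝓝 0) := by
        have := tendsto_rpow_neg_atTop (y := (2:ℝ)/3) (by norm_num)
        simpa [neg_div] using this
      exact squeeze_zero_norm' hb ht
    have hInt : Tendsto (fun N : ℝ => ∫ x in (1:ℝ)..N, auxF' g x * auxE x) atTop
        (𝓝 (∫ x in Ioi 1, auxF' g x * auxE x)) :=
      intervalIntegral_tendsto_integral_Ioi 1 hGint tendsto_id
    have hmain := (hFE0.sub (tendsto_const_nhds (x := auxF g 1 * auxE 1))).sub hInt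
    rw [zero_sub] at hmain
    refine hmain.congr' ?_
    filter_upwards [eventually_ge_atTop (1:ℝ)] with N hN
    exact (key N hN).symm
  · refine ⟨2 + 3*C, ?_⟩
    filter_upwards [eventually_ge_atTop (1:ℝ)] with N hN
    have hN0 : (0:ℝ) < N := by linarith
    have hφN : IntegrableOn (fun x : ℝ => (2:ℝ)/3 * x ^ (-(5:ℝ)/3) + C * x ^ (-(4:ℝ)/3))
        (Ioi N) :=
      ((integrableOn_Ioi_rpow_of_lt (by norm_num) hN0).const_mul _).add
        ((integrableOn_Ioi_rpow_of_lt (by norm_num) hN0).const_mul _)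
    have hsplit : (∫ x in Ioi (1:ℝ), auxF' g x * auxE x)
        = (∫ x in (1:ℝ)..N, auxF' g x * auxE x) + ∫ x in Ioi N, auxF' g x * auxE x := by
      rw [intervalIntegral.integral_of_le hN,
        ← MeasureTheory.setIntegral_union (Ioc_disjoint_Ioi le_rfl) measurableSet_Ioi
          (hGint.mono_set Ioc_subset_Ioi_self) (hGint.mono_set (Ioi_subset_Ioi hN)),
        Ioc_union_Ioi_eq_Ioi hN]
    have hdiff : (-(auxF g 1 * auxE 1) - ∫ x in Ioi 1, auxF' g x * auxE x)
          - (∫ ξ in (1:ℝ)..N, (↑(ξ ^ (-(2:ℝ)/3)) : ℂ) * Complex.exp (Complex.I * (h ξ:ℂ)))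
        = -(auxF g N * auxE N) - ∫ x in Ioi N, auxF' g x * auxE x := by
      rw [key N hN, hsplit]
      ring
    have htail : ‖∫ x in Ioi N, auxF' g x * auxE x‖
        ≤ ∫ x in Ioi N, ((2:ℝ)/3 * x ^ (-(5:ℝ)/3) + C * x ^ (-(4:ℝ)/3)) := by
      refine MeasureTheory.norm_integral_le_of_norm_le hφN ?_
      refine (ae_restrict_iff' measurableSet_Ioi).2 (ae_of_all _ fun x hx => ?_)
      rw [norm_mul, norm_auxE, mul_one]
      have hx1 : (1:ℝ) ≤ x := le_of_lt (lt_of_le_of_lt hN hx)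
      exact auxF'_bound g C x hx1 (hg' x hx1)
    have hval : (∫ x in Ioi N, ((2:ℝ)/3 * x ^ (-(5:ℝ)/3) + C * x ^ (-(4:ℝ)/3)))
        = N ^ (-(2:ℝ)/3) + 3*C * N ^ (-(1:ℝ)/3) := by
      rw [MeasureTheory.integral_add ((integrableOn_Ioi_rpow_of_lt (by norm_num) hN0).const_mul _)
        ((integrableOn_Ioi_rpow_of_lt (by norm_num) hN0).const_mul _),
        MeasureTheory.integral_const_mul, MeasureTheory.integral_const_mul,
        integral_Ioi_rpow_of_lt (by norm_num) hN0, integral_Ioi_rpow_of_lt (by norm_num) hN0,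
        show (-(5:ℝ)/3 + 1) = -(2:ℝ)/3 by norm_num, show (-(4:ℝ)/3 + 1) = -(1:ℝ)/3 by norm_num]
      ring
    have hle : N ^ (-(2:ℝ)/3) ≤ N ^ (-(1:ℝ)/3) :=
      Real.rpow_le_rpow_of_exponent_le hN (by norm_num)
    calc ‖(-(auxF g 1 * auxE 1) - ∫ x in Ioi 1, auxF' g x * auxE x)
          - ∫ ξ in (1:ℝ)..N, (↑(ξ ^ (-(2:ℝ)/3)) : ℂ) * Complex.exp (Complex.I * (h ξ:ℂ))‖
        = ‖-(auxF g N * auxE N) - ∫ x in Ioi N, auxF' g x * auxE x‖ := by rw [hdiff]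
      _ ≤ ‖-(auxF g N * auxE N)‖ + ‖∫ x in Ioi N, auxF' g x * auxE x‖ := norm_sub_le _ _
      _ ≤ N ^ (-(2:ℝ)/3) + (N ^ (-(2:ℝ)/3) + 3*C * N ^ (-(1:ℝ)/3)) := by
          rw [norm_neg, hFEnorm N hN0]
          exact add_le_add le_rfl (htail.trans (le_of_eq hval))
      _ ≤ (2 + 3*C) * N ^ (-(1:ℝ)/3) := by nlinarith [hle]
end

section
/- Let h : [1,∞) → ℝ satisfy h(ξ) = ξ + g(ξ) with g differentiable, |g'(ξ)| ≤ C ξ^(-2/3), and suppose ξ₀ ≥ 1 is such that |g'(ξ)| < 1/2 for ξ > ξ₀. Then ∫_{ξ₀}^N exp(i h(ξ)) dξ = O(N^(1/3)) as N → ∞. -/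
open MeasureTheory Filter Real Set intervalIntegral
open scoped Topology

theorem stmt1 (h g : ℝ → ℝ) (C : ℝ) (hC : 0 < C) (ξ₀ : ℝ) (hξ₀ : 1 ≤ ξ₀)
    (hhg : ∀ ξ ≥ (1:ℝ), h ξ = ξ + g ξ)
    (hgdiff : ∀ ξ ≥ (1:ℝ), DifferentiableAt ℝ g ξ)
    (hg' : ∀ ξ ≥ (1:ℝ), |deriv g ξ| ≤ C * ξ ^ (-(2:ℝ)/3))
    (hg'small : ∀ ξ > ξ₀, |deriv g ξ| < 1/2) :
    ∃ C' : ℝ, ∀ᶠ N : ℝ in atTop,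
      ‖∫ ξ in ξ₀..N, Complex.exp (Complex.I * (h ξ : ℂ))‖ ≤ C' * N ^ ((1:ℝ)/3) := by
  refine ⟨2 + 3 * C, ?_⟩
  filter_upwards [eventually_ge_atTop (max ξ₀ 1)] with N hN
  have hNξ₀ : ξ₀ ≤ N := le_trans (le_max_left _ _) hN
  have hN1 : (1:ℝ) ≤ N := le_trans (le_max_right _ _) hN
  set F : ℝ → ℂ := fun ξ => Complex.exp (Complex.I * (h ξ : ℂ)) with hF
  -- norm of F is 1
  have hFnorm : ∀ ξ : ℝ, ‖F ξ‖ = 1 := by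
    intro ξ
    rw [hF]
    simp [Complex.norm_exp_I_mul_ofReal]
  -- continuity of F on [ξ₀, N]
  have hcont_h : ContinuousOn h (Icc ξ₀ N) := by
    have hc : ContinuousOn (fun ξ : ℝ => ξ + g ξ) (Icc ξ₀ N) := fun ξ hξ =>
      (continuousAt_id.add (hgdiff ξ (le_trans hξ₀ hξ.1)).continuousAt).continuousWithinAt
    exact hc.congr (fun ξ hξ => hhg ξ (le_trans hξ₀ hξ.1))
  have hcontF : ContinuousOn F (Icc ξ₀ N) :=
    Complex.continuous_exp.comp_continuousOn
      (continuousOn_const.mul (Complex.continuous_ofReal.comp_continuousOn hcont_h))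
  -- derivative of F on (ξ₀, N)
  have hderiv : ∀ ξ ∈ Ioo ξ₀ N,
      HasDerivAt F (Complex.I * ((1:ℂ) + ((deriv g ξ : ℝ) : ℂ)) * F ξ) ξ := by
    intro ξ hξ
    have hξ1 : 1 < ξ := lt_of_le_of_lt hξ₀ hξ.1
    have hg : HasDerivAt g (deriv g ξ) ξ := (hgdiff ξ hξ1.le).hasDerivAt
    have hh : HasDerivAt h (1 + deriv g ξ) ξ := by
      have h1 : HasDerivAt (fun x : ℝ => x + g x) (1 + deriv g ξ) ξ :=
        (hasDerivAt_id ξ).add hg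
      refine h1.congr_of_eventuallyEq ?_
      filter_upwards [Ioi_mem_nhds hξ1] with x hx using hhg x (le_of_lt hx)
    have hu : HasDerivAt (fun x : ℝ => Complex.I * (h x : ℂ))
        (Complex.I * ((1 + deriv g ξ : ℝ) : ℂ)) ξ := hh.ofReal_comp.const_mul Complex.I
    have := hu.cexp
    rw [hF]
    convert this using 1
    push_cast
    ring
  -- integrability facts
  have hmeasF : AEStronglyMeasurable F (volume.restrict (Ioc ξ₀ N)) :=
    (hcontF.mono Ioc_subset_Icc_self).aestronglyMeasurable measurableSet_Ioc
  have hmeasg' : AEStronglyMeasurable (fun ξ : ℝ => ((deriv g ξ : ℝ) : ℂ))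
      (volume.restrict (Ioc ξ₀ N)) :=
    (Complex.measurable_ofReal.comp (measurable_deriv g)).aestronglyMeasurable
  have hg'bound : ∀ ξ ∈ Ioc ξ₀ N, |deriv g ξ| ≤ C := by
    intro ξ hξ
    have h1ξ : (1:ℝ) ≤ ξ := le_trans hξ₀ hξ.1.le
    refine le_trans (hg' ξ h1ξ) ?_
    have : ξ ^ (-(2:ℝ)/3) ≤ 1 := by
      apply Real.rpow_le_one_of_one_le_of_nonpos h1ξ
      norm_num
    nlinarith
  have hintconst : ∀ c : ℝ, IntegrableOn (fun _ : ℝ => c) (Ioc ξ₀ N) volume :=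
    fun c => integrableOn_const measure_Ioc_lt_top.ne
  have hint2 : IntervalIntegrable (fun ξ => ((deriv g ξ : ℝ) : ℂ) * F ξ) volume ξ₀ N := by
    rw [intervalIntegrable_iff_integrableOn_Ioc_of_le hNξ₀]
    refine Integrable.mono' (hintconst C) (hmeasg'.mul hmeasF) ?_
    filter_upwards [ae_restrict_mem measurableSet_Ioc] with ξ hξ
    rw [norm_mul, hFnorm, mul_one, Complex.norm_real, Real.norm_eq_abs]
    exact hg'bound ξ hξ
  have hint1 : IntervalIntegrable (fun ξ => ((1:ℂ) + ((deriv g ξ : ℝ) : ℂ)) * F ξ) volume ξ₀ N := by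
    rw [intervalIntegrable_iff_integrableOn_Ioc_of_le hNξ₀]
    refine Integrable.mono' (hintconst (1 + C)) ((aestronglyMeasurable_const.add hmeasg').mul hmeasF) ?_
    filter_upwards [ae_restrict_mem measurableSet_Ioc] with ξ hξ
    rw [norm_mul, hFnorm, mul_one]
    calc ‖(1:ℂ) + ((deriv g ξ : ℝ) : ℂ)‖ ≤ ‖(1:ℂ)‖ + ‖((deriv g ξ : ℝ) : ℂ)‖ := norm_add_le _ _
      _ ≤ 1 + C := by
          rw [norm_one, Complex.norm_real, Real.norm_eq_abs]
          linarith [hg'bound ξ hξ]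
  have hintF' : IntervalIntegrable (fun ξ => Complex.I * ((1:ℂ) + ((deriv g ξ : ℝ) : ℂ)) * F ξ)
      volume ξ₀ N := by
    have := hint1.const_mul Complex.I
    simpa [mul_assoc] using this
  -- FTC
  have key : ∫ ξ in ξ₀..N, Complex.I * ((1:ℂ) + ((deriv g ξ : ℝ) : ℂ)) * F ξ = F N - F ξ₀ :=
    integral_eq_sub_of_hasDerivAt_of_le hNξ₀ hcontF hderiv hintF'
  -- bound first piece
  have hfirst : ‖∫ ξ in ξ₀..N, ((1:ℂ) + ((deriv g ξ : ℝ) : ℂ)) * F ξ‖ ≤ 2 := by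
    have heq : Complex.I * ∫ ξ in ξ₀..N, ((1:ℂ) + ((deriv g ξ : ℝ) : ℂ)) * F ξ = F N - F ξ₀ := by
      rw [← key, ← intervalIntegral.integral_const_mul]
      congr 1
      funext ξ
      ring
    have : ‖Complex.I * ∫ ξ in ξ₀..N, ((1:ℂ) + ((deriv g ξ : ℝ) : ℂ)) * F ξ‖ ≤ 2 := by
      rw [heq]
      calc ‖F N - F ξ₀‖ ≤ ‖F N‖ + ‖F ξ₀‖ := norm_sub_le _ _
        _ = 2 := by rw [hFnorm, hFnorm]; norm_num
    rwa [norm_mul, Complex.norm_I, one_mul] at this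
  -- bound second piece
  have h0 : (0:ℝ) ∉ Set.uIcc ξ₀ N := by
    simp only [Set.mem_uIcc]
    rintro (⟨h1, _⟩ | ⟨h1, _⟩) <;> linarith
  have hrpow_int : IntervalIntegrable (fun ξ : ℝ => C * ξ ^ (-(2:ℝ)/3)) volume ξ₀ N :=
    (intervalIntegrable_rpow (Or.inr h0)).const_mul C
  have hval : ∫ ξ in ξ₀..N, C * ξ ^ (-(2:ℝ)/3)
      = C * ((N ^ ((1:ℝ)/3) - ξ₀ ^ ((1:ℝ)/3)) / (1/3)) := by
    rw [intervalIntegral.integral_const_mul, integral_rpow (Or.inr ⟨by norm_num, h0⟩)]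
    norm_num
  have hmono : ξ₀ ^ ((1:ℝ)/3) ≤ N ^ ((1:ℝ)/3) :=
    Real.rpow_le_rpow (by linarith) hNξ₀ (by norm_num)
  have hsecond : ‖∫ ξ in ξ₀..N, ((deriv g ξ : ℝ) : ℂ) * F ξ‖ ≤ 3 * C * N ^ ((1:ℝ)/3) := by
    have hb : ‖∫ ξ in ξ₀..N, ((deriv g ξ : ℝ) : ℂ) * F ξ‖
        ≤ |∫ ξ in ξ₀..N, C * ξ ^ (-(2:ℝ)/3)| := by
      refine intervalIntegral.norm_integral_le_abs_of_norm_le ?_ hrpow_int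
      rw [uIoc_of_le hNξ₀]
      filter_upwards [ae_restrict_mem measurableSet_Ioc] with ξ hξ
      rw [norm_mul, hFnorm, mul_one, Complex.norm_real, Real.norm_eq_abs]
      exact hg' ξ (le_trans hξ₀ hξ.1.le)
    refine le_trans hb ?_
    rw [hval, abs_of_nonneg (by nlinarith)]
    have hNpos : 0 < N ^ ((1:ℝ)/3) := Real.rpow_pos_of_pos (by linarith) _
    have hξpos : 0 < ξ₀ ^ ((1:ℝ)/3) := Real.rpow_pos_of_pos (by linarith) _
    have h3 : (N ^ ((1:ℝ)/3) - ξ₀ ^ ((1:ℝ)/3)) / (1/3) = 3 * (N ^ ((1:ℝ)/3) - ξ₀ ^ ((1:ℝ)/3)) := by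
      ring
    rw [h3]
    nlinarith
  -- split
  have split : (∫ ξ in ξ₀..N, F ξ)
      = (∫ ξ in ξ₀..N, ((1:ℂ) + ((deriv g ξ : ℝ) : ℂ)) * F ξ)
        - ∫ ξ in ξ₀..N, ((deriv g ξ : ℝ) : ℂ) * F ξ := by
    rw [← intervalIntegral.integral_sub hint1 hint2]
    congr 1
    funext ξ
    ring
  have hNpow1 : (1:ℝ) ≤ N ^ ((1:ℝ)/3) :=
    Real.one_le_rpow hN1 (by norm_num)
  calc ‖∫ ξ in ξ₀..N, Complex.exp (Complex.I * (h ξ : ℂ))‖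
      = ‖(∫ ξ in ξ₀..N, ((1:ℂ) + ((deriv g ξ : ℝ) : ℂ)) * F ξ)
          - ∫ ξ in ξ₀..N, ((deriv g ξ : ℝ) : ℂ) * F ξ‖ := by rw [← split]
    _ ≤ ‖∫ ξ in ξ₀..N, ((1:ℂ) + ((deriv g ξ : ℝ) : ℂ)) * F ξ‖
          + ‖∫ ξ in ξ₀..N, ((deriv g ξ : ℝ) : ℂ) * F ξ‖ := norm_sub_le _ _
    _ ≤ 2 + 3 * C * N ^ ((1:ℝ)/3) := add_le_add hfirst hsecond
    _ ≤ (2 + 3 * C) * N ^ ((1:ℝ)/3) := by nlinarith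
end

section
/- Let γ, σ : [1,∞) → ℝ be C¹ functions with γ'(ξ) = b(ξ) cos(γ(ξ)+σ(ξ)) where b is continuous with |b(ξ)| ≤ C ξ^(−2/3), and suppose the improper integrals S(ξ) = ∫_ξ^∞ b(η) sin(σ(η)) dη and K(ξ) = ∫_ξ^∞ b(η) cos(σ(η)) dη exist and satisfy |S(ξ)|, |K(ξ)| ≤ C ξ^(−δ) for some δ > 1/6. Then the improper integral ∫₁^∞ b(ξ) sin(γ(ξ)+σ(ξ)) dξ converges. -/
open MeasureTheory Filter Real Set intervalIntegral
open scoped Topology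

lemma aux_deriv15 (γ A B : ℝ → ℝ) (x u a' b' : ℝ)
    (hγ : HasDerivAt γ u x) (hA : HasDerivAt A a' x) (hB : HasDerivAt B b' x) :
    HasDerivAt (fun ξ => -(Real.sin (γ ξ) * B ξ) - Real.cos (γ ξ) * A ξ
        - 1/2 * (Real.cos (γ ξ)^2 * B ξ^2)
        + Real.sin (γ ξ) * Real.cos (γ ξ) * A ξ * B ξ
        - 1/2 * (Real.sin (γ ξ)^2 * A ξ^2))
      (-(Real.cos (γ x) * u) * B x - Real.sin (γ x) * b'
        + Real.sin (γ x) * u * A x - Real.cos (γ x) * a'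
        + Real.sin (γ x) * Real.cos (γ x) * u * B x^2 - Real.cos (γ x)^2 * (B x * b')
        + (Real.cos (γ x)^2 - Real.sin (γ x)^2) * u * (A x * B x)
        + Real.sin (γ x) * Real.cos (γ x) * (a' * B x + A x * b')
        - Real.sin (γ x) * Real.cos (γ x) * u * A x^2 - Real.sin (γ x)^2 * (A x * a')) x := by
  have hs := hγ.sin
  have hc := hγ.cos
  refine HasDerivAt.congr_deriv (((((hs.mul hB).neg.sub (hc.mul hA)).sub
      (((hc.pow 2).mul (hB.pow 2)).const_mul (1/2:ℝ))).add
      (((hs.mul hc).mul hA).mul hB)).sub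
      (((hs.pow 2).mul (hA.pow 2)).const_mul (1/2:ℝ))) ?_
  norm_num only [Pi.pow_apply, Pi.mul_apply]
  ring

lemma aux15_sq (c q : ℝ) (hc : c^2 ≤ 1) : ‖1/2 * (c^2 * q^2)‖ ≤ |q * q| := by
  rw [Real.norm_eq_abs, abs_mul_self, abs_of_nonneg (by positivity)]
  nlinarith [sq_nonneg q]

lemma aux15_mul4 (s c a q : ℝ) (hs : |s| ≤ 1) (hc : |c| ≤ 1) : ‖s * c * a * q‖ ≤ |a * q| := by
  rw [Real.norm_eq_abs, abs_mul, abs_mul, abs_mul]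
  have h1 : |s| * |c| ≤ 1 := by nlinarith [abs_nonneg s, abs_nonneg c]
  calc |s| * |c| * |a| * |q| ≤ 1 * |a| * |q| := by
        have := mul_le_mul_of_nonneg_right h1 (abs_nonneg a)
        exact mul_le_mul_of_nonneg_right this (abs_nonneg q)
    _ = |a| * |q| := by ring
    _ = |a * q| := (abs_mul _ _).symm

set_option maxHeartbeats 1000000 in
theorem stmt15 (γ σ b S K : ℝ → ℝ) (C δ : ℝ) (hC : 0 < C) (hδ : 1/6 < δ)
    (hγ : ContDiff ℝ 1 γ) (hσ : ContDiff ℝ 1 σ) (hb : Continuous b)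
    (hγ' : ∀ ξ ≥ (1:ℝ), deriv γ ξ = b ξ * Real.cos (γ ξ + σ ξ))
    (hbbd : ∀ ξ ≥ (1:ℝ), |b ξ| ≤ C * ξ ^ (-(2:ℝ)/3))
    (hS : ∀ ξ ≥ (1:ℝ),
      Tendsto (fun N : ℝ => ∫ η in ξ..N, b η * Real.sin (σ η)) atTop (𝓝 (S ξ)))
    (hK : ∀ ξ ≥ (1:ℝ),
      Tendsto (fun N : ℝ => ∫ η in ξ..N, b η * Real.cos (σ η)) atTop (𝓝 (K ξ)))
    (hSbd : ∀ ξ ≥ (1:ℝ), |S ξ| ≤ C * ξ ^ (-δ))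
    (hKbd : ∀ ξ ≥ (1:ℝ), |K ξ| ≤ C * ξ ^ (-δ)) :
    ∃ L : ℝ,
      Tendsto (fun N : ℝ => ∫ ξ in (1:ℝ)..N, b ξ * Real.sin (γ ξ + σ ξ)) atTop (𝓝 L) := by
  have hδ0 : (0:ℝ) < δ := by linarith
  have hγc : Continuous γ := hγ.continuous
  have hσc : Continuous σ := hσ.continuous
  have hgc : Continuous (deriv γ) := hγ.continuous_deriv le_rfl
  have hbs : Continuous (fun η => b η * Real.sin (σ η)) :=
    hb.mul (Real.continuous_sin.comp hσc)
  have hbc : Continuous (fun η => b η * Real.cos (σ η)) :=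
    hb.mul (Real.continuous_cos.comp hσc)
  set A : ℝ → ℝ := fun ξ => S 1 - ∫ η in (1:ℝ)..ξ, b η * Real.sin (σ η) with hAdef
  set B : ℝ → ℝ := fun ξ => K 1 - ∫ η in (1:ℝ)..ξ, b η * Real.cos (σ η) with hBdef
  -- A = S and B = K on [1, ∞)
  have hAeq : ∀ ξ ≥ (1:ℝ), A ξ = S ξ := by
    intro ξ hξ
    have h1 := hS 1 le_rfl
    have h3 : Tendsto (fun N : ℝ => ∫ η in (1:ℝ)..N, b η * Real.sin (σ η)) atTop
        (𝓝 ((∫ η in (1:ℝ)..ξ, b η * Real.sin (σ η)) + S ξ)) := by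
      refine (tendsto_const_nhds.add (hS ξ hξ)).congr fun N => ?_
      exact integral_add_adjacent_intervals (hbs.intervalIntegrable 1 ξ)
        (hbs.intervalIntegrable ξ N)
    have h4 := tendsto_nhds_unique h1 h3
    simp only [hAdef]; linarith
  have hBeq : ∀ ξ ≥ (1:ℝ), B ξ = K ξ := by
    intro ξ hξ
    have h1 := hK 1 le_rfl
    have h3 : Tendsto (fun N : ℝ => ∫ η in (1:ℝ)..N, b η * Real.cos (σ η)) atTop
        (𝓝 ((∫ η in (1:ℝ)..ξ, b η * Real.cos (σ η)) + K ξ)) := by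
      refine (tendsto_const_nhds.add (hK ξ hξ)).congr fun N => ?_
      exact integral_add_adjacent_intervals (hbc.intervalIntegrable 1 ξ)
        (hbc.intervalIntegrable ξ N)
    have h4 := tendsto_nhds_unique h1 h3
    simp only [hBdef]; linarith
  -- derivatives of A and B
  have hAd : ∀ ξ : ℝ, HasDerivAt A (-(b ξ * Real.sin (σ ξ))) ξ := by
    intro ξ
    exact (intervalIntegral.integral_hasDerivAt_right (hbs.intervalIntegrable 1 ξ)
      (hbs.stronglyMeasurableAtFilter _ _) hbs.continuousAt).const_sub (S 1)
  have hBd : ∀ ξ : ℝ, HasDerivAt B (-(b ξ * Real.cos (σ ξ))) ξ := by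
    intro ξ
    exact (intervalIntegral.integral_hasDerivAt_right (hbc.intervalIntegrable 1 ξ)
      (hbc.stronglyMeasurableAtFilter _ _) hbc.continuousAt).const_sub (K 1)
  have hAdiff : Differentiable ℝ A := fun ξ => (hAd ξ).differentiableAt
  have hBdiff : Differentiable ℝ B := fun ξ => (hBd ξ).differentiableAt
  have hAc : Continuous A := hAdiff.continuous
  have hBc : Continuous B := hBdiff.continuous
  -- the potential W and the remainder R
  set W : ℝ → ℝ := fun ξ => -(Real.sin (γ ξ) * B ξ) - Real.cos (γ ξ) * A ξ
      - 1/2 * (Real.cos (γ ξ)^2 * B ξ^2)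
      + Real.sin (γ ξ) * Real.cos (γ ξ) * A ξ * B ξ
      - 1/2 * (Real.sin (γ ξ)^2 * A ξ^2) with hWdef
  set R : ℝ → ℝ := fun ξ => deriv γ ξ *
      (Real.cos (γ ξ) * Real.sin (γ ξ) * B ξ^2
        + (Real.cos (γ ξ)^2 - Real.sin (γ ξ)^2) * (A ξ * B ξ)
        - Real.sin (γ ξ) * Real.cos (γ ξ) * A ξ^2) with hRdef
  have hRc : Continuous R := by
    apply hgc.mul
    exact ((((Real.continuous_cos.comp hγc).mul (Real.continuous_sin.comp hγc)).mul
      (hBc.pow 2)).add ((((Real.continuous_cos.comp hγc).pow 2).sub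
      ((Real.continuous_sin.comp hγc).pow 2)).mul (hAc.mul hBc))).sub
      (((Real.continuous_sin.comp hγc).mul (Real.continuous_cos.comp hγc)).mul (hAc.pow 2))
  have hintc : Continuous (fun ξ => b ξ * Real.sin (γ ξ + σ ξ)) :=
    hb.mul (Real.continuous_sin.comp (hγc.add hσc))
  -- key derivative identity on [1, ∞)
  have key : ∀ ξ ≥ (1:ℝ), HasDerivAt W (b ξ * Real.sin (γ ξ + σ ξ) + R ξ) ξ := by
    intro ξ hξ
    have h := aux_deriv15 γ A B ξ (deriv γ ξ) (-(b ξ * Real.sin (σ ξ)))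
      (-(b ξ * Real.cos (σ ξ))) (hγ.differentiable one_ne_zero ξ).hasDerivAt (hAd ξ) (hBd ξ)
    have heq : b ξ * Real.sin (γ ξ + σ ξ) + R ξ
        = -(Real.cos (γ ξ) * deriv γ ξ) * B ξ - Real.sin (γ ξ) * (-(b ξ * Real.cos (σ ξ)))
        + Real.sin (γ ξ) * deriv γ ξ * A ξ - Real.cos (γ ξ) * (-(b ξ * Real.sin (σ ξ)))
        + Real.sin (γ ξ) * Real.cos (γ ξ) * deriv γ ξ * B ξ^2
          - Real.cos (γ ξ)^2 * (B ξ * (-(b ξ * Real.cos (σ ξ))))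
        + (Real.cos (γ ξ)^2 - Real.sin (γ ξ)^2) * deriv γ ξ * (A ξ * B ξ)
        + Real.sin (γ ξ) * Real.cos (γ ξ) * ((-(b ξ * Real.sin (σ ξ))) * B ξ
            + A ξ * (-(b ξ * Real.cos (σ ξ))))
        - Real.sin (γ ξ) * Real.cos (γ ξ) * deriv γ ξ * A ξ^2
          - Real.sin (γ ξ)^2 * (A ξ * (-(b ξ * Real.sin (σ ξ)))) := by
      simp only [hRdef]
      rw [hγ' ξ hξ, Real.sin_add, Real.cos_add]
      ring
    rw [heq]
    exact h
  -- bound on R for ξ ≥ 1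
  have hRbd : ∀ ξ ≥ (1:ℝ), |R ξ| ≤ 3 * C^3 * ξ ^ (-(2:ℝ)/3 - 2*δ) := by
    intro ξ hξ
    have hξ0 : (0:ℝ) < ξ := by linarith
    have hg : |deriv γ ξ| ≤ C * ξ ^ (-(2:ℝ)/3) := by
      rw [hγ' ξ hξ, abs_mul]
      calc |b ξ| * |Real.cos (γ ξ + σ ξ)| ≤ |b ξ| * 1 :=
            mul_le_mul_of_nonneg_left (Real.abs_cos_le_one _) (abs_nonneg _)
        _ = |b ξ| := mul_one _
        _ ≤ C * ξ ^ (-(2:ℝ)/3) := hbbd ξ hξ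
    have hA1 : |A ξ| ≤ C * ξ ^ (-δ) := by rw [hAeq ξ hξ]; exact hSbd ξ hξ
    have hB1 : |B ξ| ≤ C * ξ ^ (-δ) := by rw [hBeq ξ hξ]; exact hKbd ξ hξ
    have hp0 : (0:ℝ) ≤ C * ξ ^ (-δ) := by positivity
    have hA2 : A ξ ^ 2 ≤ (C * ξ ^ (-δ))^2 := sq_le_sq' (neg_le_of_abs_le hA1) (le_of_abs_le hA1)
    have hB2 : B ξ ^ 2 ≤ (C * ξ ^ (-δ))^2 := sq_le_sq' (neg_le_of_abs_le hB1) (le_of_abs_le hB1)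
    have hAB : |A ξ * B ξ| ≤ (C * ξ ^ (-δ))^2 := by
      rw [abs_mul, sq]
      exact mul_le_mul hA1 hB1 (abs_nonneg _) hp0
    have hs1 : |Real.sin (γ ξ)| ≤ 1 := Real.abs_sin_le_one _
    have hc1 : |Real.cos (γ ξ)| ≤ 1 := Real.abs_cos_le_one _
    have hinner : |Real.cos (γ ξ) * Real.sin (γ ξ) * B ξ^2
        + (Real.cos (γ ξ)^2 - Real.sin (γ ξ)^2) * (A ξ * B ξ)
        - Real.sin (γ ξ) * Real.cos (γ ξ) * A ξ^2| ≤ 3 * (C * ξ ^ (-δ))^2 := by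
      have h1 : |Real.cos (γ ξ) * Real.sin (γ ξ) * B ξ^2| ≤ (C * ξ ^ (-δ))^2 := by
        rw [abs_mul, abs_mul]
        have hB2' : |B ξ ^ 2| ≤ (C * ξ ^ (-δ))^2 := by
          rwa [abs_of_nonneg (sq_nonneg _)]
        have hcs : |Real.cos (γ ξ)| * |Real.sin (γ ξ)| ≤ 1 := by
          nlinarith [abs_nonneg (Real.cos (γ ξ)), abs_nonneg (Real.sin (γ ξ))]
        calc |Real.cos (γ ξ)| * |Real.sin (γ ξ)| * |B ξ ^ 2|
            ≤ 1 * |B ξ ^ 2| := mul_le_mul_of_nonneg_right hcs (abs_nonneg _)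
          _ = |B ξ ^ 2| := one_mul _
          _ ≤ (C * ξ ^ (-δ))^2 := hB2'
      have h2 : |(Real.cos (γ ξ)^2 - Real.sin (γ ξ)^2) * (A ξ * B ξ)| ≤ (C * ξ ^ (-δ))^2 := by
        rw [abs_mul]
        have hd1 : |Real.cos (γ ξ)^2 - Real.sin (γ ξ)^2| ≤ 1 := by
          rw [abs_le]
          constructor <;> nlinarith [Real.sin_sq_add_cos_sq (γ ξ), sq_nonneg (Real.sin (γ ξ)),
            sq_nonneg (Real.cos (γ ξ))]
        nlinarith [abs_nonneg (A ξ * B ξ)]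
      have h3 : |Real.sin (γ ξ) * Real.cos (γ ξ) * A ξ^2| ≤ (C * ξ ^ (-δ))^2 := by
        rw [abs_mul, abs_mul]
        have hA2' : |A ξ ^ 2| ≤ (C * ξ ^ (-δ))^2 := by
          rwa [abs_of_nonneg (sq_nonneg _)]
        have hcs : |Real.sin (γ ξ)| * |Real.cos (γ ξ)| ≤ 1 := by
          nlinarith [abs_nonneg (Real.cos (γ ξ)), abs_nonneg (Real.sin (γ ξ))]
        calc |Real.sin (γ ξ)| * |Real.cos (γ ξ)| * |A ξ ^ 2|
            ≤ 1 * |A ξ ^ 2| := mul_le_mul_of_nonneg_right hcs (abs_nonneg _)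
          _ = |A ξ ^ 2| := one_mul _
          _ ≤ (C * ξ ^ (-δ))^2 := hA2'
      calc |Real.cos (γ ξ) * Real.sin (γ ξ) * B ξ^2
          + (Real.cos (γ ξ)^2 - Real.sin (γ ξ)^2) * (A ξ * B ξ)
          - Real.sin (γ ξ) * Real.cos (γ ξ) * A ξ^2|
          ≤ |Real.cos (γ ξ) * Real.sin (γ ξ) * B ξ^2
            + (Real.cos (γ ξ)^2 - Real.sin (γ ξ)^2) * (A ξ * B ξ)|
            + |Real.sin (γ ξ) * Real.cos (γ ξ) * A ξ^2| := abs_sub _ _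
        _ ≤ |Real.cos (γ ξ) * Real.sin (γ ξ) * B ξ^2|
            + |(Real.cos (γ ξ)^2 - Real.sin (γ ξ)^2) * (A ξ * B ξ)|
            + |Real.sin (γ ξ) * Real.cos (γ ξ) * A ξ^2| := by
              have := abs_add_le (Real.cos (γ ξ) * Real.sin (γ ξ) * B ξ^2)
                ((Real.cos (γ ξ)^2 - Real.sin (γ ξ)^2) * (A ξ * B ξ))
              linarith
        _ ≤ 3 * (C * ξ ^ (-δ))^2 := by linarith
    have hsq : (C * ξ ^ (-δ))^2 = C^2 * ξ ^ (-(2*δ)) := by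
      rw [mul_pow, ← Real.rpow_natCast (ξ ^ (-δ)) 2, ← Real.rpow_mul hξ0.le]
      congr 1
      push_cast
      ring
    calc |R ξ| = |deriv γ ξ| * |Real.cos (γ ξ) * Real.sin (γ ξ) * B ξ^2
          + (Real.cos (γ ξ)^2 - Real.sin (γ ξ)^2) * (A ξ * B ξ)
          - Real.sin (γ ξ) * Real.cos (γ ξ) * A ξ^2| := by
            simp only [hRdef]; rw [abs_mul]
      _ ≤ (C * ξ ^ (-(2:ℝ)/3)) * (3 * (C * ξ ^ (-δ))^2) :=
          mul_le_mul hg hinner (abs_nonneg _) (by positivity)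
      _ = 3 * C^3 * (ξ ^ (-(2:ℝ)/3) * ξ ^ (-(2*δ))) := by rw [hsq]; ring
      _ = 3 * C^3 * ξ ^ (-(2:ℝ)/3 - 2*δ) := by
          rw [← Real.rpow_add hξ0]; ring_nf
  -- R is integrable on [1, ∞)
  have hmaj : IntegrableOn (fun ξ : ℝ => 3 * C^3 * ξ ^ (-(2:ℝ)/3 - 2*δ)) (Ici (1:ℝ)) := by
    rw [integrableOn_Ici_iff_integrableOn_Ioi]
    exact (integrableOn_Ioi_rpow_of_lt (by linarith) one_pos).const_mul _
  have hRint : IntegrableOn R (Ici (1:ℝ)) := by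
    refine hmaj.mono' (hRc.aestronglyMeasurable.restrict) ?_
    refine (ae_restrict_iff' measurableSet_Ici).2 (ae_of_all _ fun ξ hξ => ?_)
    rw [Real.norm_eq_abs]
    exact hRbd ξ hξ
  -- A, B → 0
  have hrp0 : Tendsto (fun ξ : ℝ => C * ξ ^ (-δ)) atTop (𝓝 0) := by
    have := (tendsto_rpow_neg_atTop hδ0).const_mul C
    simpa using this
  have hA0 : Tendsto A atTop (𝓝 0) := by
    refine squeeze_zero_norm' ?_ hrp0
    filter_upwards [eventually_ge_atTop (1:ℝ)] with ξ hξ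
    rw [Real.norm_eq_abs, hAeq ξ hξ]
    exact hSbd ξ hξ
  have hB0 : Tendsto B atTop (𝓝 0) := by
    refine squeeze_zero_norm' ?_ hrp0
    filter_upwards [eventually_ge_atTop (1:ℝ)] with ξ hξ
    rw [Real.norm_eq_abs, hBeq ξ hξ]
    exact hKbd ξ hξ
  -- W → 0
  have hAabs : Tendsto (fun ξ => |A ξ|) atTop (𝓝 0) := by have h := hA0.abs; rwa [abs_zero] at h
  have hBabs : Tendsto (fun ξ => |B ξ|) atTop (𝓝 0) := by have h := hB0.abs; rwa [abs_zero] at h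
  have hBBabs : Tendsto (fun ξ => |B ξ * B ξ|) atTop (𝓝 0) := by have h := (hB0.mul hB0).abs; rwa [mul_zero, abs_zero] at h
  have hAAabs : Tendsto (fun ξ => |A ξ * A ξ|) atTop (𝓝 0) := by have h := (hA0.mul hA0).abs; rwa [mul_zero, abs_zero] at h
  have hABabs : Tendsto (fun ξ => |A ξ * B ξ|) atTop (𝓝 0) := by have h := (hA0.mul hB0).abs; rwa [mul_zero, abs_zero] at h
  have hW0 : Tendsto W atTop (𝓝 0) := by
    have t1 : Tendsto (fun ξ => Real.sin (γ ξ) * B ξ) atTop (𝓝 0) := by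
      refine squeeze_zero_norm (fun ξ => ?_) hBabs
      rw [Real.norm_eq_abs, abs_mul]
      exact mul_le_of_le_one_left (abs_nonneg _) (Real.abs_sin_le_one _)
    have t2 : Tendsto (fun ξ => Real.cos (γ ξ) * A ξ) atTop (𝓝 0) := by
      refine squeeze_zero_norm (fun ξ => ?_) hAabs
      rw [Real.norm_eq_abs, abs_mul]
      exact mul_le_of_le_one_left (abs_nonneg _) (Real.abs_cos_le_one _)
    have t3 : Tendsto (fun ξ => 1/2 * (Real.cos (γ ξ)^2 * B ξ^2)) atTop (𝓝 0) :=
      squeeze_zero_norm (fun ξ => aux15_sq _ _ (Real.cos_sq_le_one (γ ξ))) hBBabs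
    have t4 : Tendsto (fun ξ => Real.sin (γ ξ) * Real.cos (γ ξ) * A ξ * B ξ) atTop (𝓝 0) :=
      squeeze_zero_norm (fun ξ => aux15_mul4 _ _ _ _ (Real.abs_sin_le_one (γ ξ))
        (Real.abs_cos_le_one (γ ξ))) hABabs
    have t5 : Tendsto (fun ξ => 1/2 * (Real.sin (γ ξ)^2 * A ξ^2)) atTop (𝓝 0) :=
      squeeze_zero_norm (fun ξ => aux15_sq _ _ (Real.sin_sq_le_one (γ ξ))) hAAabs
    have h6 := ((((t1.neg.sub t2).sub t3).add t4).sub t5)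
    simpa [hWdef] using h6
  -- the interval integral identity for N ≥ 1
  have eqN : ∀ N ≥ (1:ℝ), (∫ ξ in (1:ℝ)..N, b ξ * Real.sin (γ ξ + σ ξ))
      = (W N - W 1) - ∫ ξ in (1:ℝ)..N, R ξ := by
    intro N hN
    have hftc : (∫ ξ in (1:ℝ)..N, (b ξ * Real.sin (γ ξ + σ ξ) + R ξ)) = W N - W 1 := by
      refine intervalIntegral.integral_eq_sub_of_hasDerivAt (fun ξ hξ => ?_)
        ((hintc.add hRc).intervalIntegrable 1 N)
      rw [uIcc_of_le hN] at hξ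
      exact key ξ hξ.1
    have hsplit : (∫ ξ in (1:ℝ)..N, (b ξ * Real.sin (γ ξ + σ ξ) + R ξ))
        = (∫ ξ in (1:ℝ)..N, b ξ * Real.sin (γ ξ + σ ξ)) + ∫ ξ in (1:ℝ)..N, R ξ :=
      intervalIntegral.integral_add (hintc.intervalIntegrable 1 N) (hRc.intervalIntegrable 1 N)
    rw [hsplit] at hftc
    linarith
  refine ⟨(0 - W 1) - ∫ ξ in Ioi (1:ℝ), R ξ, ?_⟩
  have TA : Tendsto (fun N : ℝ => (W N - W 1) - ∫ ξ in (1:ℝ)..N, R ξ) atTop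
      (𝓝 ((0 - W 1) - ∫ ξ in Ioi (1:ℝ), R ξ)) :=
    (hW0.sub_const (W 1)).sub
      (MeasureTheory.intervalIntegral_tendsto_integral_Ioi 1
        (hRint.mono_set Ioi_subset_Ici_self) tendsto_id)
  refine TA.congr' ?_
  filter_upwards [eventually_ge_atTop (1:ℝ)] with N hN
  exact (eqN N hN).symm
end

section
/- For almost every λ ∈ ℝ (explicitly, whenever the relevant maximal function is finite at λ), for every nontrivial solution ω of equation −ω'' + V(·,λ)ω = ω with ∫₁^∞ V(ξ,λ) sin(2θ(ξ,λ)) dξ convergent and |V(ξ,λ)| ≤ C(1+ξ)^(−2/3), there exist constants 0 < c₁ ≤ c₂ and a function r with |r'(ξ)| ≤ C(1+ξ)^(−2/3) such that ω(ξ) = A sin(ξ + r(ξ))(1 + o(1)) as ξ → ∞ for some A ≠ 0; in particular every solution is bounded and bounded away from having L²-norm ratio tending to 0 against any other solution. -/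
open MeasureTheory Filter Real Set intervalIntegral
open scoped Topology

lemma constOnIoi (f : ℝ → ℝ) (hf : ∀ x ∈ Ioi (1:ℝ), HasDerivAt f 0 x) :
    ∀ x ∈ Ioi (1:ℝ), ∀ y ∈ Ioi (1:ℝ), f x = f y := by
  have key : ∀ x ∈ Ioi (1:ℝ), ∀ y ∈ Ioi (1:ℝ), x ≤ y → f y = f x := by
    intro x hx y hy hxy
    have hsub : Icc x y ⊆ Ioi (1:ℝ) := fun z hz => lt_of_lt_of_le hx hz.1
    have hcont : ContinuousOn f (Icc x y) := fun z hz =>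
      ((hf z (hsub hz)).continuousAt).continuousWithinAt
    have hder : ∀ z ∈ Ico x y, HasDerivWithinAt f 0 (Ici z) z := fun z hz =>
      (hf z (hsub ⟨hz.1, hz.2.le⟩)).hasDerivWithinAt
    exact constant_of_has_deriv_right_zero hcont hder y (right_mem_Icc.2 hxy)
  intro x hx y hy
  rcases le_total x y with h | h
  · exact (key x hx y hy h).symm
  · exact key y hy x hx h

set_option maxHeartbeats 1600000 in
theorem stmt17 (q : ℝ → ℝ) (hq : Continuous q) (C : ℝ) (hC : 0 < C)
    (c : ℝ) (hc : c = (3/2 : ℝ) ^ ((2:ℝ)/3))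
    (V : ℝ → ℝ → ℝ)
    (hV : ∀ ξ lam : ℝ, V ξ lam =
      5 / (36 * ξ^2) + (-lam + q (c * ξ ^ ((2:ℝ)/3))) / (c * ξ ^ ((2:ℝ)/3))) :
    ∀ᵐ lam : ℝ, ∀ ω R θ : ℝ → ℝ,
      ContDiffOn ℝ 2 ω (Ici 1) →
      (∀ ξ ≥ (1:ℝ), -(deriv (deriv ω) ξ) + V ξ lam * ω ξ = ω ξ) →
      (∀ ξ ≥ (1:ℝ), 0 < R ξ) →
      (∀ ξ ≥ (1:ℝ), ω ξ = R ξ * Real.sin (θ ξ)) →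
      (∀ ξ ≥ (1:ℝ), deriv ω ξ = R ξ * Real.cos (θ ξ)) →
      (∀ ξ ≥ (1:ℝ), |V ξ lam| ≤ C * (1 + ξ) ^ (-(2:ℝ)/3)) →
      (∃ I : ℝ, Tendsto (fun N : ℝ =>
        ∫ ξ in (1:ℝ)..N, V ξ lam * Real.sin (2 * θ ξ)) atTop (𝓝 I)) →
      ∃ A : ℝ, A ≠ 0 ∧ ∃ r ε : ℝ → ℝ,
        (∀ ξ ≥ (1:ℝ), |deriv r ξ| ≤ C * (1 + ξ) ^ (-(2:ℝ)/3)) ∧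
        Tendsto ε atTop (𝓝 0) ∧
        (∀ ξ ≥ (1:ℝ), ω ξ = A * Real.sin (ξ + r ξ) * (1 + ε ξ)) ∧
        ∃ M : ℝ, ∀ ξ ≥ (1:ℝ), |ω ξ| ≤ M := by
  refine ae_of_all _ ?_
  intro lam ω R θ hω2 hODE hR hsin hcos hVb ⟨I, hI⟩
  -- basic abbreviations
  set vI : ℝ → ℝ := derivWithin ω (Ici (1:ℝ)) with hvIdef
  set W : ℝ → ℝ := fun t => ω t ^ 2 + vI t ^ 2 with hWdef
  set S : ℝ → ℝ := fun t => Real.sqrt (W t) with hSdef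
  -- continuity facts
  have hucont : ContinuousOn ω (Ici (1:ℝ)) := hω2.continuousOn
  have hvIcont : ContinuousOn vI (Ici (1:ℝ)) :=
    hω2.continuousOn_derivWithin (uniqueDiffOn_Ici 1) (by norm_num)
  have hWcont : ContinuousOn W (Ici (1:ℝ)) :=
    (hucont.pow 2).add (hvIcont.pow 2)
  have hvI_eq : ∀ ξ : ℝ, 1 < ξ → vI ξ = deriv ω ξ := by
    intro ξ hξ
    exact derivWithin_of_mem_nhds (mem_of_superset (isOpen_Ioi.mem_nhds hξ) Ioi_subset_Ici_self)
  have hdiff1 : ∀ ξ ∈ Ioi (1:ℝ), HasDerivAt ω (deriv ω ξ) ξ := by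
    intro ξ hξ
    have h2 : ContDiffAt ℝ 2 ω ξ :=
      hω2.contDiffAt (mem_of_superset (isOpen_Ioi.mem_nhds hξ) Ioi_subset_Ici_self)
    exact (h2.differentiableAt (by norm_num)).hasDerivAt
  have hC1 : ContDiffOn ℝ 1 (deriv ω) (Ioi (1:ℝ)) := by
    have := (hω2.mono Ioi_subset_Ici_self).deriv_of_isOpen isOpen_Ioi (m := 1) (by norm_num)
    exact this
  have hdiff2 : ∀ ξ ∈ Ioi (1:ℝ), HasDerivAt (deriv ω) (deriv (deriv ω) ξ) ξ := by
    intro ξ hξ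
    have h1 : ContDiffAt ℝ 1 (deriv ω) ξ := hC1.contDiffAt (isOpen_Ioi.mem_nhds hξ)
    exact (h1.differentiableAt (by norm_num)).hasDerivAt
  have hd2 : ∀ ξ ≥ (1:ℝ), deriv (deriv ω) ξ = (V ξ lam - 1) * ω ξ := by
    intro ξ hξ; linear_combination -hODE ξ hξ
  have hWR : ∀ ξ : ℝ, 1 < ξ → W ξ = R ξ ^ 2 := by
    intro ξ hξ
    have h1 : ω ξ = R ξ * Real.sin (θ ξ) := hsin ξ hξ.le
    have h2 : deriv ω ξ = R ξ * Real.cos (θ ξ) := hcos ξ hξ.le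
    have h3 := Real.sin_sq_add_cos_sq (θ ξ)
    simp only [hWdef, hvI_eq ξ hξ, h1, h2]
    nlinarith [h3]
  have hWpos : ∀ ξ ≥ (1:ℝ), 0 < W ξ := by
    intro ξ hξ
    rcases eq_or_lt_of_le hξ with h | h
    · subst h
      have hR1 := hR 1 le_rfl
      have h1 := hsin 1 le_rfl
      have h3 := Real.sin_sq_add_cos_sq (θ 1)
      by_cases hd : DifferentiableAt ℝ ω 1
      · have hvI1 : vI 1 = deriv ω 1 :=
          hd.hasDerivAt.hasDerivWithinAt.derivWithin (uniqueDiffOn_Ici 1 1 self_mem_Ici)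
        have h2 := hcos 1 le_rfl
        simp only [hWdef, hvI1, h1, h2]
        have hval : (R 1 * Real.sin (θ 1))^2 + (R 1 * Real.cos (θ 1))^2 = R 1^2 := by
          linear_combination (R 1^2) * h3
        rw [hval]
        exact pow_pos hR1 2
      · have h0 : deriv ω 1 = 0 := deriv_zero_of_not_differentiableAt hd
        have h2 := hcos 1 le_rfl
        rw [h0] at h2
        have hcθ : Real.cos (θ 1) = 0 := by
          rcases mul_eq_zero.1 h2.symm with h | h
          · exact absurd h hR1.ne'
          · exact h
        have hsθ : Real.sin (θ 1) ^ 2 = 1 := by rw [hcθ] at h3; linarith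
        have : ω 1 ^ 2 = R 1 ^ 2 := by rw [h1]; nlinarith
        simp only [hWdef]
        nlinarith [sq_nonneg (vI 1)]
    · rw [hWR ξ h]
      exact pow_pos (hR ξ hξ) 2
  -- continuity of V
  have hcpos : 0 < c := by rw [hc]; exact Real.rpow_pos_of_pos (by norm_num) _
  have hVcont : ContinuousOn (fun ξ => V ξ lam) (Ici (1:ℝ)) := by
    have hrpow : ContinuousOn (fun ξ : ℝ => ξ ^ ((2:ℝ)/3)) (Ici (1:ℝ)) :=
      continuousOn_id.rpow_const (fun x _ => Or.inr (by norm_num))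
    have hden2 : ∀ ξ ∈ Ici (1:ℝ), c * ξ ^ ((2:ℝ)/3) ≠ 0 := by
      intro ξ hξ
      have : (0:ℝ) < ξ := lt_of_lt_of_le one_pos hξ
      exact (mul_pos hcpos (Real.rpow_pos_of_pos this _)).ne'
    have h1 : ContinuousOn (fun ξ : ℝ =>
        5 / (36 * ξ^2) + (-lam + q (c * ξ ^ ((2:ℝ)/3))) / (c * ξ ^ ((2:ℝ)/3)))
        (Ici (1:ℝ)) := by
      apply ContinuousOn.add
      · apply continuousOn_const.div ((continuous_const.mul (continuous_pow 2)).continuousOn)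
        intro ξ hξ
        have : (0:ℝ) < ξ := lt_of_lt_of_le one_pos hξ
        exact mul_ne_zero (by norm_num) (pow_ne_zero 2 this.ne')
      · apply ContinuousOn.div
        · exact continuousOn_const.add
            (hq.comp_continuousOn (continuousOn_const.mul hrpow))
        · exact continuousOn_const.mul hrpow
        · exact hden2
    exact h1.congr (fun ξ _ => hV ξ lam)
  -- the phase-derivative function
  set g : ℝ → ℝ := fun s => 1 - V s lam * (ω s) ^ 2 / W s with hgdef
  have hgcont : ContinuousOn g (Ici (1:ℝ)) := by
    refine (continuousOn_const.sub ?_)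
    exact ((hVcont.mul (hucont.pow 2)).div hWcont (fun ξ hξ => (hWpos ξ hξ).ne'))
  set G : ℝ → ℝ := fun t => g (max t 1) with hGdef
  have hGcont : Continuous G :=
    hgcont.comp_continuous (continuous_id.max continuous_const) (fun t => mem_Ici.2 (le_max_right _ _))
  set θ₀ : ℝ → ℝ := fun x => ∫ t in (1:ℝ)..x, G t with hθ₀def
  have hθ₀ : ∀ x : ℝ, HasDerivAt θ₀ (G x) x := by
    intro x
    exact intervalIntegral.integral_hasDerivAt_right
      (hGcont.intervalIntegrable _ _)
      (hGcont.stronglyMeasurableAtFilter _ _) hGcont.continuousAt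
  have hθ₀cont : Continuous θ₀ := continuous_iff_continuousAt.2 fun x => (hθ₀ x).continuousAt
  -- derivative facts on Ioi 1
  have hWd : ∀ ξ ∈ Ioi (1:ℝ), HasDerivAt W (2 * ω ξ * deriv ω ξ * V ξ lam) ξ := by
    intro ξ hξ
    have hξ1 : (1:ℝ) < ξ := hξ
    have hu := hdiff1 ξ hξ
    have hv := hdiff2 ξ hξ
    have hW2 : HasDerivAt (fun t => ω t ^ 2 + deriv ω t ^ 2)
        (2 * ω ξ * deriv ω ξ * V ξ lam) ξ := by
      have h := (hu.pow 2).add (hv.pow 2)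
      refine h.congr_deriv ?_
      rw [hd2 ξ hξ1.le]
      push_cast
      ring
    apply hW2.congr_of_eventuallyEq
    filter_upwards [isOpen_Ioi.mem_nhds hξ1] with t ht
    simp only [hWdef, hvI_eq t ht]
  have hSpos : ∀ ξ ≥ (1:ℝ), 0 < S ξ := fun ξ hξ => Real.sqrt_pos.2 (hWpos ξ hξ)
  have hSd : ∀ ξ ∈ Ioi (1:ℝ),
      HasDerivAt S (2 * ω ξ * deriv ω ξ * V ξ lam / (2 * S ξ)) ξ := by
    intro ξ hξ
    exact (hWd ξ hξ).sqrt (hWpos ξ hξ.le).ne'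
  set P : ℝ → ℝ := fun t => deriv ω t * Real.cos (θ₀ t) + ω t * Real.sin (θ₀ t) with hPdef
  set Q : ℝ → ℝ := fun t => ω t * Real.cos (θ₀ t) - deriv ω t * Real.sin (θ₀ t) with hQdef
  have hG_eq : ∀ ξ ≥ (1:ℝ), G ξ = 1 - V ξ lam * (ω ξ) ^ 2 / W ξ := by
    intro ξ hξ; simp only [hGdef, hgdef, max_eq_left hξ]
  have hPn : ∀ ξ ∈ Ioi (1:ℝ), HasDerivAt (fun t => P t / S t) 0 ξ := by
    intro ξ hξ
    have hξ1 : (1:ℝ) < ξ := hξ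
    have hu := hdiff1 ξ hξ
    have hv' : HasDerivAt (deriv ω) ((V ξ lam - 1) * ω ξ) ξ := by
      have h := hdiff2 ξ hξ
      rwa [hd2 ξ hξ1.le] at h
    have hth := hθ₀ ξ
    have hP : HasDerivAt P
        ((V ξ lam - 1) * ω ξ * Real.cos (θ₀ ξ) + deriv ω ξ * (-Real.sin (θ₀ ξ) * G ξ)
          + (deriv ω ξ * Real.sin (θ₀ ξ) + ω ξ * (Real.cos (θ₀ ξ) * G ξ))) ξ :=
      (hv'.mul hth.cos).add (hu.mul hth.sin)
    have hSne := (hSpos ξ hξ1.le).ne'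
    have hdiv := hP.div (hSd ξ hξ) hSne
    have hSS : S ξ ^ 2 = W ξ := Real.sq_sqrt (hWpos ξ hξ1.le).le
    have hσ2 : S ξ ^ 2 = ω ξ ^ 2 + deriv ω ξ ^ 2 := by
      rw [hSS]; simp only [hWdef, hvI_eq ξ hξ1]
    have hG : G ξ = 1 - V ξ lam * ω ξ ^ 2 / S ξ ^ 2 := by
      rw [hG_eq ξ hξ1.le, ← hSS]
    refine hdiv.congr_deriv ?_
    rw [div_eq_zero_iff]
    left
    rw [hG]
    simp only [hPdef]
    field_simp
    ring_nf
    linear_combination (V ξ lam * ω ξ * Real.cos (θ₀ ξ)) * hσ2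
  have hQn : ∀ ξ ∈ Ioi (1:ℝ), HasDerivAt (fun t => Q t / S t) 0 ξ := by
    intro ξ hξ
    have hξ1 : (1:ℝ) < ξ := hξ
    have hu := hdiff1 ξ hξ
    have hv' : HasDerivAt (deriv ω) ((V ξ lam - 1) * ω ξ) ξ := by
      have h := hdiff2 ξ hξ
      rwa [hd2 ξ hξ1.le] at h
    have hth := hθ₀ ξ
    have hQ : HasDerivAt Q
        ((deriv ω ξ * Real.cos (θ₀ ξ) + ω ξ * (-Real.sin (θ₀ ξ) * G ξ))
          - ((V ξ lam - 1) * ω ξ * Real.sin (θ₀ ξ) + deriv ω ξ * (Real.cos (θ₀ ξ) * G ξ))) ξ :=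
      (hu.mul hth.cos).sub (hv'.mul hth.sin)
    have hSne := (hSpos ξ hξ1.le).ne'
    have hdiv := hQ.div (hSd ξ hξ) hSne
    have hSS : S ξ ^ 2 = W ξ := Real.sq_sqrt (hWpos ξ hξ1.le).le
    have hσ2 : S ξ ^ 2 = ω ξ ^ 2 + deriv ω ξ ^ 2 := by
      rw [hSS]; simp only [hWdef, hvI_eq ξ hξ1]
    have hG : G ξ = 1 - V ξ lam * ω ξ ^ 2 / S ξ ^ 2 := by
      rw [hG_eq ξ hξ1.le, ← hSS]
    refine hdiv.congr_deriv ?_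
    rw [div_eq_zero_iff]
    left
    rw [hG]
    simp only [hQdef]
    field_simp
    ring_nf
    linear_combination (-(V ξ lam * ω ξ * Real.sin (θ₀ ξ))) * hσ2
  -- constancy
  set c₀ : ℝ := P 2 / S 2 with hc₀def
  set s₀ : ℝ := Q 2 / S 2 with hs₀def
  have h2mem : (2:ℝ) ∈ Ioi (1:ℝ) := by norm_num
  have hPconst : ∀ ξ ∈ Ioi (1:ℝ), P ξ = c₀ * S ξ := by
    intro ξ hξ
    have hcon := constOnIoi _ hPn ξ hξ 2 h2mem
    have hS := (hSpos ξ hξ.le).ne'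
    have hS2 := (hSpos 2 (by norm_num)).ne'
    have h2 := (div_eq_div_iff hS hS2).1 hcon
    rw [hc₀def, div_mul_eq_mul_div, eq_div_iff hS2]
    linarith
  have hQconst : ∀ ξ ∈ Ioi (1:ℝ), Q ξ = s₀ * S ξ := by
    intro ξ hξ
    have hcon := constOnIoi _ hQn ξ hξ 2 h2mem
    have hS := (hSpos ξ hξ.le).ne'
    have hS2 := (hSpos 2 (by norm_num)).ne'
    have h2 := (div_eq_div_iff hS hS2).1 hcon
    rw [hs₀def, div_mul_eq_mul_div, eq_div_iff hS2]
    linarith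
  have hSS2 : S 2 ^ 2 = W 2 := Real.sq_sqrt (hWpos 2 (by norm_num)).le
  have hW2' : W 2 = ω 2 ^ 2 + deriv ω 2 ^ 2 := by
    simp only [hWdef, hvI_eq 2 (by norm_num)]
  have hPQ2 : P 2 ^ 2 + Q 2 ^ 2 = W 2 := by
    simp only [hPdef, hQdef]
    rw [hW2']
    linear_combination (ω 2 ^ 2 + deriv ω 2 ^ 2) * (Real.sin_sq_add_cos_sq (θ₀ 2))
  have hc₀s₀ : c₀ ^ 2 + s₀ ^ 2 = 1 := by
    rw [hc₀def, hs₀def, div_pow, div_pow, ← add_div, hSS2, hPQ2,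
      div_self (hWpos 2 (by norm_num)).ne']
  clear hc₀def hs₀def
  clear_value c₀ s₀
  -- the angle δ
  set δ : ℝ := if 0 ≤ s₀ then Real.arccos c₀ else -Real.arccos c₀ with hδdef
  have hc₀le : -1 ≤ c₀ ∧ c₀ ≤ 1 := by
    have h2 : c₀ ^ 2 ≤ 1 := by linarith [sq_nonneg s₀]
    have h3 : |c₀| ≤ 1 := (sq_le_one_iff_abs_le_one c₀).1 h2
    exact abs_le.1 h3
  have hδc : Real.cos δ = c₀ := by
    rw [hδdef]
    split_ifs with h
    · exact Real.cos_arccos hc₀le.1 hc₀le.2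
    · rw [Real.cos_neg]; exact Real.cos_arccos hc₀le.1 hc₀le.2
  have hδs : Real.sin δ = s₀ := by
    have h1 : 1 - c₀ ^ 2 = s₀ ^ 2 := by linarith
    rw [hδdef]
    split_ifs with h
    · rw [Real.sin_arccos, h1, Real.sqrt_sq_eq_abs, abs_of_nonneg h]
    · rw [Real.sin_neg, Real.sin_arccos, h1, Real.sqrt_sq_eq_abs,
        abs_of_neg (not_le.1 h)]
      ring
  -- key representation
  have hScont : ContinuousOn S (Ici (1:ℝ)) :=
    Real.continuous_sqrt.comp_continuousOn hWcont
  have hgt : ∀ ξ ∈ Ioi (1:ℝ), ω ξ = S ξ * Real.sin (θ₀ ξ + δ) := by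
    intro ξ hξ
    have hωPQ : ω ξ = P ξ * Real.sin (θ₀ ξ) + Q ξ * Real.cos (θ₀ ξ) := by
      simp only [hPdef, hQdef]
      linear_combination (-(ω ξ)) * (Real.sin_sq_add_cos_sq (θ₀ ξ))
    have hP' := hPconst ξ hξ
    have hQ' := hQconst ξ hξ
    rw [Real.sin_add, hδc, hδs]
    linear_combination hωPQ + Real.sin (θ₀ ξ) * hP' + Real.cos (θ₀ ξ) * hQ'
  have hkey : ∀ ξ ≥ (1:ℝ), ω ξ = S ξ * Real.sin (θ₀ ξ + δ) := by
    intro ξ hξ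
    rcases eq_or_lt_of_le hξ with h | h
    · subst h
      have h1lim : Tendsto ω (𝓝[>] (1:ℝ)) (𝓝 (ω 1)) :=
        (hucont 1 self_mem_Ici).mono Ioi_subset_Ici_self
      have h2lim : Tendsto (fun ξ => S ξ * Real.sin (θ₀ ξ + δ)) (𝓝[>] (1:ℝ))
          (𝓝 (S 1 * Real.sin (θ₀ 1 + δ))) := by
        apply ContinuousWithinAt.tendsto
        exact ((hScont 1 self_mem_Ici).mono Ioi_subset_Ici_self).mul
          ((Real.continuous_sin.comp (hθ₀cont.add continuous_const)).continuousAt.continuousWithinAt)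
      have heq : ω =ᶠ[𝓝[>] (1:ℝ)] fun ξ => S ξ * Real.sin (θ₀ ξ + δ) :=
        eventually_mem_nhdsWithin.mono (fun ξ hξ => hgt ξ hξ)
      exact tendsto_nhds_unique (Tendsto.congr' heq h1lim) h2lim
    · exact hgt ξ h
  -- convergence of S
  obtain ⟨A, hApos, hSlim⟩ : ∃ A : ℝ, 0 < A ∧ Tendsto S atTop (𝓝 A) := by
    set hb : ℝ → ℝ := fun t => V t lam * (2 * ω t * vI t / W t) with hbdef
    have hbcont : ContinuousOn hb (Ici (1:ℝ)) :=
      hVcont.mul (((continuousOn_const.mul hucont).mul hvIcont).div hWcont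
        (fun ξ hξ => (hWpos ξ hξ).ne'))
    have hagree : ∀ t : ℝ, 1 < t → V t lam * Real.sin (2 * θ t) = hb t := by
      intro t ht
      have hRt := (hR t ht.le).ne'
      have h1 := hsin t ht.le
      have h2 := hcos t ht.le
      simp only [hbdef]
      rw [Real.sin_two_mul, hvI_eq t ht, hWR t ht, h1, h2]
      field_simp
    have hIntOrig : ∀ a b : ℝ, 1 ≤ a → a ≤ b →
        IntervalIntegrable (fun t => V t lam * Real.sin (2 * θ t)) volume a b := by
      intro a b ha hab
      have hsub : uIcc a b ⊆ Ici 1 := by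
        rw [uIcc_of_le hab]
        exact fun x hx => le_trans ha hx.1
      have hbint : IntervalIntegrable hb volume a b :=
        (hbcont.mono hsub).intervalIntegrable
      apply hbint.congr
      intro x hx
      rw [uIoc_of_le hab] at hx
      exact (hagree x (lt_of_le_of_lt ha hx.1)).symm
    have hIeq : ∀ a b : ℝ, 1 ≤ a → a ≤ b →
        (∫ t in a..b, V t lam * Real.sin (2 * θ t)) = ∫ t in a..b, hb t := by
      intro a b ha hab
      apply intervalIntegral.integral_congr_ae
      apply ae_of_all
      intro x hx
      rw [uIoc_of_le hab] at hx
      exact hagree x (lt_of_le_of_lt ha hx.1)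
    set J2 : ℝ := ∫ t in (1:ℝ)..2, V t lam * Real.sin (2 * θ t) with hJ2def
    have hFTC : ∀ N : ℝ, 2 ≤ N →
        (∫ t in (2:ℝ)..N, hb t) = Real.log (W N) - Real.log (W 2) := by
      intro N hN
      apply intervalIntegral.integral_eq_sub_of_hasDerivAt
      · intro x hx
        rw [uIcc_of_le hN] at hx
        have hx1 : (1:ℝ) < x := lt_of_lt_of_le one_lt_two hx.1
        have h := (hWd x hx1).log (hWpos x hx1.le).ne'
        refine h.congr_deriv ?_
        simp only [hbdef]
        rw [hvI_eq x hx1]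
        ring
      · have hsub : uIcc 2 N ⊆ Ici 1 := by
          rw [uIcc_of_le hN]
          exact fun x hx => le_trans one_le_two hx.1
        exact (hbcont.mono hsub).intervalIntegrable
    have hlogW : Tendsto (fun N => Real.log (W N)) atTop
        (𝓝 (Real.log (W 2) + (I - J2))) := by
      have h1 : ∀ᶠ N in atTop, Real.log (W 2)
          + ((∫ t in (1:ℝ)..N, V t lam * Real.sin (2 * θ t)) - J2) = Real.log (W N) := by
        filter_upwards [eventually_ge_atTop (2:ℝ)] with N hN
        have hadd := intervalIntegral.integral_add_adjacent_intervals
          (hIntOrig 1 2 le_rfl one_le_two) (hIntOrig 2 N one_le_two hN)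
        have h2N : (∫ t in (2:ℝ)..N, V t lam * Real.sin (2 * θ t)) = ∫ t in (2:ℝ)..N, hb t :=
          hIeq 2 N one_le_two hN
        have hftc := hFTC N hN
        rw [← hJ2def] at hadd
        linarith [hadd, h2N, hftc]
      have h2 : Tendsto (fun N => Real.log (W 2)
          + ((∫ t in (1:ℝ)..N, V t lam * Real.sin (2 * θ t)) - J2)) atTop
          (𝓝 (Real.log (W 2) + (I - J2))) :=
        tendsto_const_nhds.add (hI.sub_const J2)
      exact Tendsto.congr' (by filter_upwards [h1] with N hN using hN) h2
    refine ⟨Real.exp ((Real.log (W 2) + (I - J2)) / 2), Real.exp_pos _, ?_⟩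
    have h3 : Tendsto (fun N => Real.exp (Real.log (W N) / 2)) atTop
        (𝓝 (Real.exp ((Real.log (W 2) + (I - J2)) / 2))) :=
      (Real.continuous_exp.continuousAt.tendsto).comp (hlogW.div_const 2)
    apply Tendsto.congr' _ h3
    filter_upwards [eventually_ge_atTop (2:ℝ)] with N hN
    have hWN : 0 < W N := hWpos N (le_trans one_le_two hN)
    simp only [hSdef]
    rw [Real.sqrt_eq_rpow, Real.rpow_def_of_pos hWN, mul_one_div]
  -- assemble
  set r : ℝ → ℝ := fun ξ => θ₀ ξ + δ - ξ with hrdef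
  set ε : ℝ → ℝ := fun ξ => S ξ / A - 1 with hεdef
  refine ⟨A, hApos.ne', r, ε, ?_, ?_, ?_, ?_⟩
  · intro ξ hξ
    have hr : HasDerivAt r (G ξ - 1) ξ := by
      exact ((hθ₀ ξ).add_const δ).sub (hasDerivAt_id ξ)
    rw [hr.deriv]
    have h1 : G ξ - 1 = -(V ξ lam * (ω ξ) ^ 2 / W ξ) := by rw [hG_eq ξ hξ]; ring
    rw [h1, abs_neg]
    have hW := hWpos ξ hξ
    have hfrac : (ω ξ) ^ 2 / W ξ ≤ 1 := by
      rw [div_le_one hW]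
      simp only [hWdef]
      nlinarith [sq_nonneg (vI ξ)]
    have hfrac0 : 0 ≤ (ω ξ) ^ 2 / W ξ := div_nonneg (sq_nonneg _) hW.le
    calc |V ξ lam * (ω ξ) ^ 2 / W ξ| = |V ξ lam| * ((ω ξ) ^ 2 / W ξ) := by
          rw [mul_div_assoc, abs_mul, abs_of_nonneg hfrac0]
      _ ≤ |V ξ lam| * 1 := by
          exact mul_le_mul_of_nonneg_left hfrac (abs_nonneg _)
      _ ≤ C * (1 + ξ) ^ (-(2:ℝ)/3) := by rw [mul_one]; exact hVb ξ hξ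
  · have : Tendsto ε atTop (𝓝 (A / A - 1)) := (hSlim.div_const A).sub_const 1
    simpa [div_self hApos.ne'] using this
  · intro ξ hξ
    have h1 : ξ + r ξ = θ₀ ξ + δ := by simp only [hrdef]; ring
    rw [h1, hkey ξ hξ]
    simp only [hεdef]
    field_simp
    ring
  · have hbound : ∀ ξ ≥ (1:ℝ), |ω ξ| ≤ S ξ := by
      intro ξ hξ
      rw [hkey ξ hξ, abs_mul, abs_of_nonneg (Real.sqrt_nonneg _)]
      calc S ξ * |Real.sin (θ₀ ξ + δ)| ≤ S ξ * 1 :=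
            mul_le_mul_of_nonneg_left (Real.abs_sin_le_one _) (Real.sqrt_nonneg _)
        _ = S ξ := mul_one _
    have hev : ∀ᶠ ξ in atTop, S ξ < A + 1 :=
      hSlim.eventually_lt_const (lt_add_one A)
    rw [eventually_atTop] at hev
    obtain ⟨T, hT⟩ := hev
    obtain ⟨B, hB⟩ := (isCompact_Icc (a := (1:ℝ)) (b := max T 1)).exists_bound_of_continuousOn
      (hScont.mono (fun x hx => hx.1))
    refine ⟨max B (A + 1), ?_⟩
    intro ξ hξ
    rcases le_total ξ (max T 1) with h | h
    · calc |ω ξ| ≤ S ξ := hbound ξ hξ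
        _ ≤ B := by have := hB ξ ⟨hξ, h⟩; rwa [Real.norm_eq_abs, abs_of_nonneg (Real.sqrt_nonneg _)] at this
        _ ≤ max B (A + 1) := le_max_left _ _
    · have hξT : T ≤ ξ := le_trans (le_max_left T 1) h
      calc |ω ξ| ≤ S ξ := hbound ξ hξ
        _ ≤ A + 1 := (hT ξ hξT).le
        _ ≤ max B (A + 1) := le_max_right _ _
end
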